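/- Let V be a real vector space with non-degenerate symmetric bilinear form, and let J₁, J₂ be commuting orthogonal complex structures on V (Jᵢ² = -1, ⟨Jᵢa, Jᵢb⟩ = ⟨a,b⟩, J₁J₂ = J₂J₁) such that G = -J₁J₂ satisfies G² = 1 and ⟨Ga, b⟩ is positive definite. Let L₁, L₂ ⊆ V⊗ℂ be the +i eigenspaces of J₁, J₂. Then V⊗ℂ = L₁⁺ ⊕ L₁⁻ ⊕ conj(L₁⁺) ⊕ conj(L₁⁻) where L₁⁺ = L₁ ∩ L₂ and L₁⁻ = L₁ ∩ conj(L₂); moreover L₁ = L₁⁺ ⊕ L₁⁻, L₂ = L₁⁺ ⊕ conj(L₁⁻), the +1 eigenspace of G complexifies to L₁⁺ ⊕ conj(L₁⁺), and the -1 eigenspace to L₁⁻ ⊕ conj(L₁⁻). -/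
import Mathlib


open TensorProduct

section GKHelpers
variable {W : Type*} [AddCommGroup W] [Module ℂ W]

/-- Projector onto the `+i` eigenspace of a complex structure. -/
noncomputable def pP (A : W →ₗ[ℂ] W) : W →ₗ[ℂ] W := (1/2 : ℂ) • (LinearMap.id - Complex.I • A)
/-- Projector onto the `-i` eigenspace of a complex structure. -/
noncomputable def pM (A : W →ₗ[ℂ] W) : W →ₗ[ℂ] W := (1/2 : ℂ) • (LinearMap.id + Complex.I • A)

variable (A : W →ₗ[ℂ] W)

lemma pP_add_pM (w : W) : pP A w + pM A w = w := by
  simp only [pP, pM, LinearMap.smul_apply, LinearMap.sub_apply, LinearMap.add_apply,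
    LinearMap.id_apply]
  match_scalars <;> ring_nf <;> simp [Complex.I_sq] <;> ring

lemma pP_eigen (hA : ∀ w, A (A w) = -w) (w : W) : A (pP A w) = Complex.I • pP A w := by
  simp only [pP, LinearMap.smul_apply, LinearMap.sub_apply, LinearMap.id_apply,
    map_smul, map_sub, hA]
  match_scalars <;> ring_nf <;> simp [Complex.I_sq] <;> ring

lemma pM_eigen (hA : ∀ w, A (A w) = -w) (w : W) : A (pM A w) = (-Complex.I) • pM A w := by
  simp only [pM, LinearMap.smul_apply, LinearMap.add_apply, LinearMap.id_apply,
    map_smul, map_add, hA]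
  match_scalars <;> ring_nf <;> simp [Complex.I_sq] <;> ring

lemma pP_of_pos {w : W} (h : A w = Complex.I • w) : pP A w = w := by
  simp only [pP, LinearMap.smul_apply, LinearMap.sub_apply, LinearMap.id_apply, h]
  match_scalars <;> ring_nf <;> simp [Complex.I_sq] <;> ring

lemma pM_of_pos {w : W} (h : A w = Complex.I • w) : pM A w = 0 := by
  simp only [pM, LinearMap.smul_apply, LinearMap.add_apply, LinearMap.id_apply, h]
  match_scalars <;> ring_nf <;> simp [Complex.I_sq] <;> ring

lemma pP_of_neg {w : W} (h : A w = (-Complex.I) • w) : pP A w = 0 := by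
  simp only [pP, LinearMap.smul_apply, LinearMap.sub_apply, LinearMap.id_apply, h]
  match_scalars <;> ring_nf <;> simp [Complex.I_sq] <;> ring

lemma pM_of_neg {w : W} (h : A w = (-Complex.I) • w) : pM A w = w := by
  simp only [pM, LinearMap.smul_apply, LinearMap.add_apply, LinearMap.id_apply, h]
  match_scalars <;> ring_nf <;> simp [Complex.I_sq] <;> ring

lemma pP_comm (C : W →ₗ[ℂ] W) (hAC : ∀ w, A (C w) = C (A w)) (w : W) :
    pP A (C w) = C (pP A w) := by
  simp only [pP, LinearMap.smul_apply, LinearMap.sub_apply, LinearMap.id_apply,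
    map_smul, map_sub, hAC]

lemma pM_comm (C : W →ₗ[ℂ] W) (hAC : ∀ w, A (C w) = C (A w)) (w : W) :
    pM A (C w) = C (pM A w) := by
  simp only [pM, LinearMap.smul_apply, LinearMap.add_apply, LinearMap.id_apply,
    map_smul, map_add, hAC]

lemma gk_eq_zero_of_eq_neg {t : W} (key : t = -t) : t = 0 := by
  have h2 : (2:ℂ) • t = 0 := by rw [two_smul]; nth_rewrite 2 [key]; exact add_neg_cancel t
  exact (smul_eq_zero.mp h2).resolve_left two_ne_zero

end GKHelpers

lemma gk_einj : Function.Injective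
    (![3*Complex.I, -Complex.I, -3*Complex.I, Complex.I] : Fin 4 → ℂ) := by
  intro a b hab
  fin_cases a <;> fin_cases b <;> simp_all [Complex.ext_iff] <;> norm_num at hab

theorem abstract_GK {W : Type*} [AddCommGroup W] [Module ℂ W]
    (A Bc Gop : W →ₗ[ℂ] W)
    (hA : ∀ w, A (A w) = -w) (hB : ∀ w, Bc (Bc w) = -w)
    (hAB : ∀ w, A (Bc w) = Bc (A w))
    (hGop : ∀ w, Gop w = -(A (Bc w))) :
    iSupIndep ![Module.End.eigenspace A Complex.I ⊓ Module.End.eigenspace Bc Complex.I,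
      Module.End.eigenspace A Complex.I ⊓ Module.End.eigenspace Bc (-Complex.I),
      Module.End.eigenspace A (-Complex.I) ⊓ Module.End.eigenspace Bc (-Complex.I),
      Module.End.eigenspace A (-Complex.I) ⊓ Module.End.eigenspace Bc Complex.I] ∧
    (Module.End.eigenspace A Complex.I ⊓ Module.End.eigenspace Bc Complex.I) ⊔
      (Module.End.eigenspace A Complex.I ⊓ Module.End.eigenspace Bc (-Complex.I)) ⊔
      (Module.End.eigenspace A (-Complex.I) ⊓ Module.End.eigenspace Bc (-Complex.I)) ⊔
      (Module.End.eigenspace A (-Complex.I) ⊓ Module.End.eigenspace Bc Complex.I) = ⊤ ∧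
    Module.End.eigenspace A Complex.I =
      (Module.End.eigenspace A Complex.I ⊓ Module.End.eigenspace Bc Complex.I) ⊔
      (Module.End.eigenspace A Complex.I ⊓ Module.End.eigenspace Bc (-Complex.I)) ∧
    Module.End.eigenspace Bc Complex.I =
      (Module.End.eigenspace A Complex.I ⊓ Module.End.eigenspace Bc Complex.I) ⊔
      (Module.End.eigenspace A (-Complex.I) ⊓ Module.End.eigenspace Bc Complex.I) ∧
    Module.End.eigenspace Gop 1 =
      (Module.End.eigenspace A Complex.I ⊓ Module.End.eigenspace Bc Complex.I) ⊔
      (Module.End.eigenspace A (-Complex.I) ⊓ Module.End.eigenspace Bc (-Complex.I)) ∧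
    Module.End.eigenspace Gop (-1) =
      (Module.End.eigenspace A Complex.I ⊓ Module.End.eigenspace Bc (-Complex.I)) ⊔
      (Module.End.eigenspace A (-Complex.I) ⊓ Module.End.eigenspace Bc Complex.I) := by
  have hBA : ∀ w, Bc (A w) = A (Bc w) := fun w => (hAB w).symm
  have memiff : ∀ (x : W) (μ ν : ℂ),
      x ∈ (Module.End.eigenspace A μ ⊓ Module.End.eigenspace Bc ν) ↔
        A x = μ • x ∧ Bc x = ν • x := fun x μ ν => by
    rw [Submodule.mem_inf, Module.End.mem_eigenspace_iff, Module.End.mem_eigenspace_iff]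
  have cPA : ∀ w, A (pP Bc w) = pP Bc (A w) := fun w => (pP_comm Bc A hBA w).symm
  have cMA : ∀ w, A (pM Bc w) = pM Bc (A w) := fun w => (pM_comm Bc A hBA w).symm
  have q0A : ∀ z, pP A (pP Bc (A z)) = A (pP A (pP Bc z)) := fun z => by
    rw [← cPA, pP_comm A A fun _ => rfl]
  have q0B : ∀ z, pP A (pP Bc (Bc z)) = Bc (pP A (pP Bc z)) := fun z => by
    rw [pP_comm Bc Bc fun _ => rfl, pP_comm A Bc hAB]
  have q1A : ∀ z, pP A (pM Bc (A z)) = A (pP A (pM Bc z)) := fun z => by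
    rw [← cMA, pP_comm A A fun _ => rfl]
  have q1B : ∀ z, pP A (pM Bc (Bc z)) = Bc (pP A (pM Bc z)) := fun z => by
    rw [pM_comm Bc Bc fun _ => rfl, pP_comm A Bc hAB]
  have q2A : ∀ z, pM A (pM Bc (A z)) = A (pM A (pM Bc z)) := fun z => by
    rw [← cMA, pM_comm A A fun _ => rfl]
  have q2B : ∀ z, pM A (pM Bc (Bc z)) = Bc (pM A (pM Bc z)) := fun z => by
    rw [pM_comm Bc Bc fun _ => rfl, pM_comm A Bc hAB]
  have q3A : ∀ z, pM A (pP Bc (A z)) = A (pM A (pP Bc z)) := fun z => by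
    rw [← cPA, pM_comm A A fun _ => rfl]
  have q3B : ∀ z, pM A (pP Bc (Bc z)) = Bc (pM A (pP Bc z)) := fun z => by
    rw [pP_comm Bc Bc fun _ => rfl, pM_comm A Bc hAB]
  have sMP : ∀ w, pM A (pP Bc w) = pP Bc (pM A w) := fun w =>
    pM_comm A (pP Bc) (fun w => cPA w) w
  have sMM : ∀ w, pM A (pM Bc w) = pM Bc (pM A w) := fun w =>
    pM_comm A (pM Bc) (fun w => cMA w) w
  have m0 : ∀ w, pP A (pP Bc w) ∈
      Module.End.eigenspace A Complex.I ⊓ Module.End.eigenspace Bc Complex.I := fun w =>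
    (memiff _ _ _).2 ⟨pP_eigen A hA _, by rw [← pP_comm A Bc hAB, pP_eigen Bc hB, map_smul]⟩
  have m1 : ∀ w, pP A (pM Bc w) ∈
      Module.End.eigenspace A Complex.I ⊓ Module.End.eigenspace Bc (-Complex.I) := fun w =>
    (memiff _ _ _).2 ⟨pP_eigen A hA _, by rw [← pP_comm A Bc hAB, pM_eigen Bc hB, map_smul]⟩
  have m2 : ∀ w, pM A (pM Bc w) ∈
      Module.End.eigenspace A (-Complex.I) ⊓ Module.End.eigenspace Bc (-Complex.I) := fun w =>
    (memiff _ _ _).2 ⟨pM_eigen A hA _, by rw [← pM_comm A Bc hAB, pM_eigen Bc hB, map_smul]⟩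
  have m3 : ∀ w, pM A (pP Bc w) ∈
      Module.End.eigenspace A (-Complex.I) ⊓ Module.End.eigenspace Bc Complex.I := fun w =>
    (memiff _ _ _).2 ⟨pM_eigen A hA _, by rw [← pM_comm A Bc hAB, pP_eigen Bc hB, map_smul]⟩
  have hsum : ∀ w : W,
      pP A (pP Bc w) + pP A (pM Bc w) + pM A (pM Bc w) + pM A (pP Bc w) = w := by
    intro w
    have h1 : pP A (pP Bc w) + pP A (pM Bc w) = pP A w := by rw [← map_add, pP_add_pM]
    have h2 : pM A (pM Bc w) + pM A (pP Bc w) = pM A w := by rw [← map_add, add_comm, pP_add_pM]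
    calc pP A (pP Bc w) + pP A (pM Bc w) + pM A (pM Bc w) + pM A (pP Bc w)
        = (pP A (pP Bc w) + pP A (pM Bc w)) + (pM A (pM Bc w) + pM A (pP Bc w)) := by abel
      _ = w := by rw [h1, h2, pP_add_pM]
  refine ⟨?_, ?_, ?_, ?_, ?_, ?_⟩
  · -- independence
    refine ((Module.End.eigenspaces_iSupIndep (A + (2:ℂ) • Bc)).comp gk_einj).mono ?_
    intro i
    fin_cases i
    · show _ ≤ Module.End.eigenspace (A + (2:ℂ) • Bc) (3*Complex.I)
      intro x hx
      obtain ⟨h1, h2⟩ := (memiff x _ _).1 hx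
      rw [Module.End.mem_eigenspace_iff]
      simp only [LinearMap.add_apply, LinearMap.smul_apply, h1, h2]
      match_scalars; ring
    · show _ ≤ Module.End.eigenspace (A + (2:ℂ) • Bc) (-Complex.I)
      intro x hx
      obtain ⟨h1, h2⟩ := (memiff x _ _).1 hx
      rw [Module.End.mem_eigenspace_iff]
      simp only [LinearMap.add_apply, LinearMap.smul_apply, h1, h2]
      match_scalars; ring
    · show _ ≤ Module.End.eigenspace (A + (2:ℂ) • Bc) (-3*Complex.I)
      intro x hx
      obtain ⟨h1, h2⟩ := (memiff x _ _).1 hx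
      rw [Module.End.mem_eigenspace_iff]
      simp only [LinearMap.add_apply, LinearMap.smul_apply, h1, h2]
      match_scalars; ring
    · show _ ≤ Module.End.eigenspace (A + (2:ℂ) • Bc) (Complex.I)
      intro x hx
      obtain ⟨h1, h2⟩ := (memiff x _ _).1 hx
      rw [Module.End.mem_eigenspace_iff]
      simp only [LinearMap.add_apply, LinearMap.smul_apply, h1, h2]
      match_scalars; ring
  · -- sum is everything
    refine le_antisymm le_top ?_
    intro w _
    rw [← hsum w]
    exact Submodule.add_mem _ (Submodule.add_mem _ (Submodule.add_mem _
      (Submodule.mem_sup_left (Submodule.mem_sup_left (Submodule.mem_sup_left (m0 w))))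
      (Submodule.mem_sup_left (Submodule.mem_sup_left (Submodule.mem_sup_right (m1 w)))))
      (Submodule.mem_sup_left (Submodule.mem_sup_right (m2 w))))
      (Submodule.mem_sup_right (m3 w))
  · -- eigenspace of A
    refine le_antisymm ?_ (sup_le inf_le_left inf_le_left)
    intro x hx
    rw [Module.End.mem_eigenspace_iff] at hx
    have h2 : pM A (pM Bc x) = 0 := by rw [sMM, pM_of_pos A hx, map_zero]
    have h3 : pM A (pP Bc x) = 0 := by rw [sMP, pM_of_pos A hx, map_zero]
    have hs := hsum x
    rw [h2, h3, add_zero, add_zero] at hs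
    rw [← hs]
    exact Submodule.add_mem _ (Submodule.mem_sup_left (m0 x)) (Submodule.mem_sup_right (m1 x))
  · -- eigenspace of Bc
    refine le_antisymm ?_ (sup_le inf_le_right inf_le_right)
    intro x hx
    rw [Module.End.mem_eigenspace_iff] at hx
    have hz : pM Bc x = 0 := pM_of_pos Bc hx
    have hs := hsum x
    rw [hz, map_zero, map_zero, add_zero, add_zero] at hs
    rw [← hs]
    exact Submodule.add_mem _ (Submodule.mem_sup_left (m0 x)) (Submodule.mem_sup_right (m3 x))
  · -- eigenspace of Gop at 1
    refine le_antisymm ?_ (sup_le ?_ ?_)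
    · intro x hx
      rw [Module.End.mem_eigenspace_iff, one_smul] at hx
      have hx' : -(A (Bc x)) = x := by rw [← hGop, hx]
      -- kill the two middle components
      obtain ⟨h1, h2⟩ := (memiff (pP A (pM Bc x)) _ _).1 (m1 x)
      have k1 : pP A (pM Bc x) = 0 := by
        refine gk_eq_zero_of_eq_neg (W := W) ?_
        conv_lhs => rw [← hx']
        rw [map_neg, map_neg, q1A, q1B, h2, map_smul, h1, smul_smul]
        simp [Complex.I_mul_I]
      obtain ⟨h1', h2'⟩ := (memiff (pM A (pP Bc x)) _ _).1 (m3 x)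
      have k3 : pM A (pP Bc x) = 0 := by
        refine gk_eq_zero_of_eq_neg (W := W) ?_
        conv_lhs => rw [← hx']
        rw [map_neg, map_neg, q3A, q3B, h2', map_smul, h1', smul_smul]
        simp [Complex.I_mul_I]
      have hs := hsum x
      rw [k1, k3, add_zero, add_zero] at hs
      rw [← hs]
      exact Submodule.add_mem _ (Submodule.mem_sup_left (m0 x)) (Submodule.mem_sup_right (m2 x))
    · intro x hx
      obtain ⟨h1, h2⟩ := (memiff x _ _).1 hx
      rw [Module.End.mem_eigenspace_iff, hGop, h2, map_smul, h1, one_smul, smul_smul]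
      simp [Complex.I_mul_I]
    · intro x hx
      obtain ⟨h1, h2⟩ := (memiff x _ _).1 hx
      rw [Module.End.mem_eigenspace_iff, hGop, h2, map_smul, h1, one_smul, smul_smul]
      simp [Complex.I_mul_I]
  · -- eigenspace of Gop at -1
    refine le_antisymm ?_ (sup_le ?_ ?_)
    · intro x hx
      rw [Module.End.mem_eigenspace_iff] at hx
      have hx' : A (Bc x) = x := by
        have := hGop x
        rw [hx] at this
        have : -(A (Bc x)) = -x := by rw [← this]; rw [neg_smul, one_smul]
        exact neg_injective this
      obtain ⟨h1, h2⟩ := (memiff (pP A (pP Bc x)) _ _).1 (m0 x)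
      have k0 : pP A (pP Bc x) = 0 := by
        refine gk_eq_zero_of_eq_neg (W := W) ?_
        conv_lhs => rw [← hx']
        rw [q0A, q0B, h2, map_smul, h1, smul_smul]
        simp [Complex.I_mul_I]
      obtain ⟨h1', h2'⟩ := (memiff (pM A (pM Bc x)) _ _).1 (m2 x)
      have k2 : pM A (pM Bc x) = 0 := by
        refine gk_eq_zero_of_eq_neg (W := W) ?_
        conv_lhs => rw [← hx']
        rw [q2A, q2B, h2', map_smul, h1', smul_smul]
        simp [Complex.I_mul_I]
      have hs := hsum x
      rw [k0, k2, zero_add, add_zero] at hs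
      rw [← hs]
      exact Submodule.add_mem _ (Submodule.mem_sup_left (m1 x)) (Submodule.mem_sup_right (m3 x))
    · intro x hx
      obtain ⟨h1, h2⟩ := (memiff x _ _).1 hx
      rw [Module.End.mem_eigenspace_iff, hGop, h2, map_smul, h1, smul_smul]
      match_scalars
      simp [Complex.I_mul_I]
    · intro x hx
      obtain ⟨h1, h2⟩ := (memiff x _ _).1 hx
      rw [Module.End.mem_eigenspace_iff, hGop, h2, map_smul, h1, smul_smul]
      match_scalars
      simp [Complex.I_mul_I]

theorem stmt_18 {V : Type*} [AddCommGroup V] [Module ℝ V]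
    (B : LinearMap.BilinForm ℝ V)
    (hsymm : ∀ a b, B a b = B b a)
    (hnondeg : ∀ a, (∀ b, B a b = 0) → a = 0)
    (J₁ J₂ : V →ₗ[ℝ] V)
    (hJ₁2 : ∀ a, J₁ (J₁ a) = -a) (hJ₂2 : ∀ a, J₂ (J₂ a) = -a)
    (hJ₁B : ∀ a b, B (J₁ a) (J₁ b) = B a b)
    (hJ₂B : ∀ a b, B (J₂ a) (J₂ b) = B a b)
    (hcomm : ∀ a, J₁ (J₂ a) = J₂ (J₁ a))
    (G : V →ₗ[ℝ] V) (hG : ∀ a, G a = -(J₁ (J₂ a)))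
    (hG2 : ∀ a, G (G a) = a)
    (hpos : ∀ a : V, a ≠ 0 → 0 < B (G a) a) :
    let J1c := LinearMap.baseChange ℂ J₁
    let J2c := LinearMap.baseChange ℂ J₂
    let Gc := LinearMap.baseChange ℂ G
    let Lp := Module.End.eigenspace J1c Complex.I ⊓ Module.End.eigenspace J2c Complex.I
    let Lm := Module.End.eigenspace J1c Complex.I ⊓ Module.End.eigenspace J2c (-Complex.I)
    let Lpc := Module.End.eigenspace J1c (-Complex.I) ⊓ Module.End.eigenspace J2c (-Complex.I)
    let Lmc := Module.End.eigenspace J1c (-Complex.I) ⊓ Module.End.eigenspace J2c Complex.I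
    iSupIndep ![Lp, Lm, Lpc, Lmc] ∧
    Lp ⊔ Lm ⊔ Lpc ⊔ Lmc = ⊤ ∧
    Module.End.eigenspace J1c Complex.I = Lp ⊔ Lm ∧
    Module.End.eigenspace J2c Complex.I = Lp ⊔ Lmc ∧
    Module.End.eigenspace Gc 1 = Lp ⊔ Lpc ∧
    Module.End.eigenspace Gc (-1) = Lm ⊔ Lmc := by
  intro J1c J2c Gc Lp Lm Lpc Lmc
  have hA : ∀ w : ℂ ⊗[ℝ] V, J1c (J1c w) = -w := by
    intro w
    induction w using TensorProduct.induction_on with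
    | zero => simp
    | tmul c v => simp [J1c, LinearMap.baseChange_tmul, hJ₁2, TensorProduct.tmul_neg]
    | add x y hx hy => rw [map_add, map_add, hx, hy, neg_add]
  have hB : ∀ w : ℂ ⊗[ℝ] V, J2c (J2c w) = -w := by
    intro w
    induction w using TensorProduct.induction_on with
    | zero => simp
    | tmul c v => simp [J2c, LinearMap.baseChange_tmul, hJ₂2, TensorProduct.tmul_neg]
    | add x y hx hy => rw [map_add, map_add, hx, hy, neg_add]
  have hABc : ∀ w : ℂ ⊗[ℝ] V, J1c (J2c w) = J2c (J1c w) := by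
    intro w
    induction w using TensorProduct.induction_on with
    | zero => simp
    | tmul c v => simp [J1c, J2c, LinearMap.baseChange_tmul, hcomm]
    | add x y hx hy => rw [map_add, map_add, map_add, map_add, hx, hy]
  have hGc : ∀ w : ℂ ⊗[ℝ] V, Gc w = -(J1c (J2c w)) := by
    intro w
    induction w using TensorProduct.induction_on with
    | zero => simp
    | tmul c v => simp [Gc, J1c, J2c, LinearMap.baseChange_tmul, hG, TensorProduct.tmul_neg]
    | add x y hx hy => rw [map_add, hx, hy, map_add, map_add, neg_add]
  exact abstract_GK J1c J2c Gc hA hB hABc hGc
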